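/- Let n≥2 and let S_n be the symmetric group on n letters, generated by the set T_n of all transpositions. Then the Cayley graph of (S_n, T_n) satisfies CD(0, n(n−1)): for every function f:S_n→ℝ and every x∈S_n, Γ₂f(x) ≥ (1/(n(n−1)))·(Δf(x))², where Δf(x)=∑_{τ∈T_n}(f(x·τ)−f(x)), Γf(x)=(1/2)∑_{τ∈T_n}(f(x·τ)−f(x))², Γ(f,g)(x)=(1/2)∑_{τ∈T_n}(f(x·τ)−f(x))(g(x·τ)−g(x)), and Γ₂f=(1/2)Δ(Γf)−Γ(f,Δf). -/
import Mathlib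


open scoped Classical

noncomputable section SymmOps

/-- The set of all transpositions in the symmetric group `S_n`. -/
def transpositions (n : ℕ) : Finset (Equiv.Perm (Fin n)) :=
  Finset.univ.filter fun τ : Equiv.Perm (Fin n) => τ.IsSwap

/-- The Laplacian on the Cayley graph of `(S_n, T_n)`:
`Δf(x) = ∑_{τ ∈ T_n} (f(x·τ) - f(x))`. -/
def lapT (n : ℕ) (f : Equiv.Perm (Fin n) → ℝ) (x : Equiv.Perm (Fin n)) : ℝ :=
  ∑ τ ∈ transpositions n, (f (x * τ) - f x)

/-- `Γf(x) = (1/2) ∑_{τ ∈ T_n} (f(x·τ) - f(x))²`. -/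
def gammaT (n : ℕ) (f : Equiv.Perm (Fin n) → ℝ) (x : Equiv.Perm (Fin n)) : ℝ :=
  (1 / 2) * ∑ τ ∈ transpositions n, (f (x * τ) - f x) ^ 2

/-- `Γ(f,g)(x) = (1/2) ∑_{τ ∈ T_n} (f(x·τ) - f(x)) (g(x·τ) - g(x))`. -/
def gammaBilT (n : ℕ) (f g : Equiv.Perm (Fin n) → ℝ) (x : Equiv.Perm (Fin n)) : ℝ :=
  (1 / 2) * ∑ τ ∈ transpositions n, (f (x * τ) - f x) * (g (x * τ) - g x)

/-- `Γ₂ f = (1/2) Δ (Γ f) - Γ(f, Δ f)`. -/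
def gamma2T (n : ℕ) (f : Equiv.Perm (Fin n) → ℝ) (x : Equiv.Perm (Fin n)) : ℝ :=
  (1 / 2) * lapT n (gammaT n f) x - gammaBilT n f (lapT n f) x

end SymmOps

private lemma memT {n : ℕ} {τ : Equiv.Perm (Fin n)} :
    τ ∈ transpositions n ↔ τ.IsSwap := by
  simp [transpositions]

private lemma sq_of_swap {n : ℕ} {τ : Equiv.Perm (Fin n)} (h : τ.IsSwap) : τ * τ = 1 := by
  obtain ⟨a, b, hab, rfl⟩ := h
  exact Equiv.swap_mul_self a b

private lemma inv_of_swap {n : ℕ} {τ : Equiv.Perm (Fin n)} (h : τ.IsSwap) : τ⁻¹ = τ := by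
  obtain ⟨a, b, hab, rfl⟩ := h
  exact Equiv.swap_inv a b

private lemma conj_swap {n : ℕ} {τ σ : Equiv.Perm (Fin n)} (hτ : τ.IsSwap) (hσ : σ.IsSwap) :
    (σ * τ * σ).IsSwap := by
  obtain ⟨a, b, hab, rfl⟩ := hτ
  have hinv : σ⁻¹ = σ := inv_of_swap hσ
  have : σ * Equiv.swap a b * σ = Equiv.swap (σ a) (σ b) := by
    rw [Equiv.swap_apply_apply, hinv]
  rw [this]
  exact ⟨σ a, σ b, fun hh => hab (σ.injective hh), rfl⟩

private lemma cube_one {n : ℕ} {x y z : Fin n} (hxy : x ≠ y) (hxz : x ≠ z) (hyz : y ≠ z) :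
    (Equiv.swap x y * Equiv.swap x z) ^ 3 = 1 := by
  have h := (Equiv.Perm.isThreeCycle_swap_mul_swap_same hxy hxz hyz).orderOf
  rw [← h]
  exact pow_orderOf_eq_one _

private lemma swap_dichotomy {n : ℕ} {τ σ : Equiv.Perm (Fin n)} (hτ : τ.IsSwap) (hσ : σ.IsSwap) :
    σ * τ * σ = τ ∨ (σ * τ) ^ 3 = 1 := by
  obtain ⟨a, b, hab, rfl⟩ := hτ
  obtain ⟨c, d, hcd, rfl⟩ := hσ
  by_cases h1 : Equiv.swap c d = Equiv.swap a b
  · left; rw [h1, Equiv.swap_mul_self, one_mul]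
  by_cases hca : c = a
  · subst hca
    have hdb : d ≠ b := fun h => h1 (by rw [h])
    right; exact cube_one hcd hab hdb
  by_cases hcb : c = b
  · subst hcb
    have hda : d ≠ a := fun h => h1 (by rw [h]; exact (Equiv.swap_comm a c).symm)
    right
    rw [Equiv.swap_comm a c]
    exact cube_one hcd (Ne.symm hab) hda
  by_cases hda : d = a
  · subst hda
    right
    rw [Equiv.swap_comm c d]
    exact cube_one (Ne.symm hcd) hab hcb
  by_cases hdb : d = b
  · subst hdb
    right
    rw [Equiv.swap_comm c d, Equiv.swap_comm a d]
    exact cube_one (Ne.symm hcd) (Ne.symm hab) hca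
  · left
    have hd : (Equiv.swap c d).Disjoint (Equiv.swap a b) := by
      intro w
      rcases eq_or_ne w c with rfl | hwc
      · right; rw [Equiv.swap_apply_of_ne_of_ne hca hcb]
      rcases eq_or_ne w d with rfl | hwd
      · right; rw [Equiv.swap_apply_of_ne_of_ne hda hdb]
      · left; rw [Equiv.swap_apply_of_ne_of_ne hwc hwd]
    rw [hd.commute.eq, mul_assoc, Equiv.swap_mul_self, mul_one]

private noncomputable def Fv (n : ℕ) (f : Equiv.Perm (Fin n) → ℝ)
    (x g : Equiv.Perm (Fin n)) : ℝ := f (x * g) - f x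

private noncomputable def Qv (n : ℕ) (f : Equiv.Perm (Fin n) → ℝ)
    (x : Equiv.Perm (Fin n)) (p : Equiv.Perm (Fin n) × Equiv.Perm (Fin n)) : ℝ :=
  (Fv n f x (p.1 * p.2) - 2 * Fv n f x p.1) ^ 2 - (Fv n f x p.1 - Fv n f x p.2) ^ 2

private def rho {n : ℕ} (p : Equiv.Perm (Fin n) × Equiv.Perm (Fin n)) :
    Equiv.Perm (Fin n) × Equiv.Perm (Fin n) := (p.2, p.2 * p.1 * p.2)

private lemma gamma2_eq (n : ℕ) (f : Equiv.Perm (Fin n) → ℝ) (x : Equiv.Perm (Fin n)) :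
    gamma2T n f x
      = (1/4) * ∑ τ ∈ transpositions n, ∑ σ ∈ transpositions n, Qv n f x (τ, σ) := by
  unfold gamma2T gammaBilT lapT gammaT Qv Fv
  simp only [Finset.mul_sum, ← Finset.sum_sub_distrib, mul_assoc]
  refine Finset.sum_congr rfl fun τ _ => ?_
  refine Finset.sum_congr rfl fun σ _ => ?_
  ring

private lemma conj_conj {n : ℕ} {σ τ : Equiv.Perm (Fin n)} (h : σ * σ = 1) :
    σ * (σ * τ * σ) * σ = τ := by
  have : σ * (σ * τ * σ) * σ = (σ * σ) * τ * (σ * σ) := by group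
  rw [this, h, one_mul, mul_one]

private lemma sum_rho {n : ℕ} (G : Equiv.Perm (Fin n) × Equiv.Perm (Fin n) → ℝ) :
    ∑ p ∈ (transpositions n) ×ˢ (transpositions n), G (rho p)
      = ∑ p ∈ (transpositions n) ×ˢ (transpositions n), G p := by
  refine Finset.sum_nbij' (i := fun p => rho p)
    (j := fun p => (p.1 * p.2 * p.1, p.1)) ?_ ?_ ?_ ?_ ?_
  · rintro ⟨τ, σ⟩ hp
    obtain ⟨h1, h2⟩ := Finset.mem_product.mp hp
    exact Finset.mem_product.mpr ⟨h2, memT.mpr (conj_swap (memT.mp h1) (memT.mp h2))⟩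
  · rintro ⟨τ, σ⟩ hp
    obtain ⟨h1, h2⟩ := Finset.mem_product.mp hp
    exact Finset.mem_product.mpr ⟨memT.mpr (conj_swap (memT.mp h2) (memT.mp h1)), h1⟩
  · rintro ⟨τ, σ⟩ hp
    obtain ⟨h1, h2⟩ := Finset.mem_product.mp hp
    have hs2 : σ * σ = 1 := sq_of_swap (memT.mp h2)
    simp only [rho, Prod.mk.injEq]
    exact ⟨conj_conj hs2, trivial⟩
  · rintro ⟨τ, σ⟩ hp
    obtain ⟨h1, h2⟩ := Finset.mem_product.mp hp
    have ht2 : τ * τ = 1 := sq_of_swap (memT.mp h1)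
    simp only [rho, Prod.mk.injEq]
    exact ⟨trivial, conj_conj ht2⟩
  · intro p _; rfl

private lemma orbit_bound (n : ℕ) (f : Equiv.Perm (Fin n) → ℝ) (x : Equiv.Perm (Fin n))
    (τ σ : Equiv.Perm (Fin n)) (hτ : τ.IsSwap) (hσ : σ.IsSwap) :
    (if τ = σ then 24 * (Fv n f x τ)^2 else 0) ≤
      Qv n f x (τ, σ) + Qv n f x (rho (τ, σ)) + Qv n f x (rho (rho (τ, σ)))
      + Qv n f x (rho (rho (rho (τ, σ)))) + Qv n f x (rho (rho (rho (rho (τ, σ)))))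
      + Qv n f x (rho (rho (rho (rho (rho (τ, σ)))))) := by
  have ht2 : τ * τ = 1 := sq_of_swap hτ
  have hs2 : σ * σ = 1 := sq_of_swap hσ
  by_cases he : τ = σ
  · subst he
    have hr : rho (τ, τ) = (τ, τ) := by simp [rho, ht2]
    rw [if_pos rfl]
    simp only [hr]
    have hQ : Qv n f x (τ, τ) = 4 * (Fv n f x τ)^2 := by
      simp only [Qv, Fv, ht2, mul_one]
      ring
    rw [hQ]; linarith
  rw [if_neg he]
  rcases swap_dichotomy hτ hσ with hc | h3
  · -- commuting case
    have hcomm : σ * τ = τ * σ := by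
      conv_rhs => rw [← hc]
      rw [mul_assoc, hs2, mul_one]
    have hr1 : rho (τ, σ) = (σ, τ) := by
      simp only [rho, Prod.mk.injEq]
      exact ⟨trivial, hc⟩
    have hr2 : rho (σ, τ) = (τ, σ) := by
      simp only [rho, Prod.mk.injEq]
      refine ⟨trivial, ?_⟩
      rw [← hcomm, mul_assoc, ht2, mul_one]
    simp only [hr1, hr2]
    have hQ1 : Qv n f x (τ, σ) = (Fv n f x (τ*σ) - 2 * Fv n f x τ)^2
        - (Fv n f x τ - Fv n f x σ)^2 := rfl
    have hQ2 : Qv n f x (σ, τ) = (Fv n f x (τ*σ) - 2 * Fv n f x σ)^2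
        - (Fv n f x σ - Fv n f x τ)^2 := by
      simp only [Qv, hcomm]
    rw [hQ1, hQ2]
    nlinarith [sq_nonneg (Fv n f x (τ*σ) - Fv n f x τ - Fv n f x σ)]
  · -- 3-cycle case
    have hh : (σ * τ) * (σ * τ) * (σ * τ) = 1 := by
      have h := h3; rw [pow_succ, pow_two] at h; exact h
    have hu : (σ * τ) * (σ * τ) = τ * σ := by
      have h := eq_inv_of_mul_eq_one_left hh
      rw [h, mul_inv_rev, inv_of_swap hτ, inv_of_swap hσ]
    have h3' : (τ * σ) ^ 3 = 1 := by
      have hts : τ * σ = (σ * τ)⁻¹ := by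
        rw [mul_inv_rev, inv_of_swap hτ, inv_of_swap hσ]
      rw [hts, inv_pow, h3, inv_one]
    have hv : (τ * σ) * (τ * σ) = σ * τ := by
      have h1 : (τ * σ) * (τ * σ) * (τ * σ) = 1 := by
        have h := h3'; rw [pow_succ, pow_two] at h; exact h
      have h := eq_inv_of_mul_eq_one_left h1
      rw [h, mul_inv_rev, inv_of_swap hτ, inv_of_swap hσ]
    have key2 : (σ * τ * σ) * σ * (σ * τ * σ) = τ := by
      have s1 : (σ * τ * σ) * σ = σ * τ := by rw [mul_assoc, hs2, mul_one]
      rw [s1]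
      have hre : (σ * τ) * (σ * τ * σ) = ((σ * τ) * (σ * τ)) * σ := by group
      rw [hre, hu, mul_assoc, hs2, mul_one]
    have key3 : τ * (σ * τ * σ) * τ = σ := by
      have hre : τ * (σ * τ * σ) * τ = ((τ * σ) * (τ * σ)) * τ := by group
      rw [hre, hv, mul_assoc, ht2, mul_one]
    have e1 : σ * (σ * τ * σ) = τ * σ := by
      have hre : σ * (σ * τ * σ) = (σ * σ) * (τ * σ) := by group
      rw [hre, hs2, one_mul]
    have e3 : (σ * τ * σ) * τ = τ * σ := by
      have hre : (σ * τ * σ) * τ = (σ * τ) * (σ * τ) := by group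
      rw [hre, hu]
    have hr1 : rho (τ, σ) = (σ, σ * τ * σ) := rfl
    have hr2 : rho (σ, σ * τ * σ) = (σ * τ * σ, τ) := by
      simp only [rho, Prod.mk.injEq]
      exact ⟨trivial, key2⟩
    have hr3 : rho (σ * τ * σ, τ) = (τ, σ) := by
      simp only [rho, Prod.mk.injEq]
      exact ⟨trivial, key3⟩
    simp only [hr1, hr2, hr3]
    have hQ0 : Qv n f x (τ, σ) = (Fv n f x (τ*σ) - 2*Fv n f x τ)^2
        - (Fv n f x τ - Fv n f x σ)^2 := rfl
    have hQ1 : Qv n f x (σ, σ*τ*σ) = (Fv n f x (τ*σ) - 2*Fv n f x σ)^2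
        - (Fv n f x σ - Fv n f x (σ*τ*σ))^2 := by
      simp only [Qv]
      rw [e1]
    have hQ2 : Qv n f x (σ*τ*σ, τ) = (Fv n f x (τ*σ) - 2*Fv n f x (σ*τ*σ))^2
        - (Fv n f x (σ*τ*σ) - Fv n f x τ)^2 := by
      simp only [Qv]
      rw [e3]
    rw [hQ0, hQ1, hQ2]
    nlinarith [sq_nonneg (3*Fv n f x (τ*σ) - 2*(Fv n f x τ + Fv n f x σ + Fv n f x (σ*τ*σ))),
      sq_nonneg (Fv n f x τ - Fv n f x σ), sq_nonneg (Fv n f x σ - Fv n f x (σ*τ*σ)),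
      sq_nonneg (Fv n f x (σ*τ*σ) - Fv n f x τ)]

private lemma card_T_le (n : ℕ) (hn : 1 ≤ n) :
    (transpositions n).card ≤ n * (n - 1) := by
  have hz : 0 < n := hn
  have key : (transpositions n).card ≤ (Finset.univ.offDiag : Finset (Fin n × Fin n)).card := by
    refine Finset.card_le_card_of_injOn
      (f := fun τ => if h : τ.IsSwap then ((h.choose, h.choose_spec.choose) : Fin n × Fin n)
        else (⟨0, hz⟩, ⟨0, hz⟩)) ?_ ?_
    · intro τ hτ
      have hsw : τ.IsSwap := memT.mp hτ
      simp only [dif_pos hsw]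
      refine Finset.mem_offDiag.mpr ⟨Finset.mem_univ _, Finset.mem_univ _, ?_⟩
      exact hsw.choose_spec.choose_spec.1
    · intro τ hτ τ' hτ' hff
      have hsw : τ.IsSwap := memT.mp (by simpa using hτ)
      have hsw' : τ'.IsSwap := memT.mp (by simpa using hτ')
      simp only [dif_pos hsw, dif_pos hsw'] at hff
      have h1 := hsw.choose_spec.choose_spec.2
      have h2 := hsw'.choose_spec.choose_spec.2
      have ha : hsw.choose = hsw'.choose := congrArg Prod.fst hff
      have hb : hsw.choose_spec.choose = hsw'.choose_spec.choose := congrArg Prod.snd hff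
      rw [h1, h2]
      exact congrArg₂ Equiv.swap ha hb
  calc (transpositions n).card
      ≤ (Finset.univ.offDiag : Finset (Fin n × Fin n)).card := key
    _ = n * n - n := by rw [Finset.offDiag_card, Finset.card_univ, Fintype.card_fin]
    _ = n * (n - 1) := by
        obtain ⟨m, rfl⟩ := Nat.exists_eq_add_of_le hn
        rw [Nat.add_comm 1 m, Nat.add_sub_cancel, Nat.mul_succ, Nat.add_sub_cancel]

/-- The Cayley graph of the symmetric group `S_n` (`n ≥ 2`) with
the set `T_n` of all transpositions as generating set satisfies `CD(0, n(n-1))`: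
`Γ₂ f(x) ≥ (1/(n(n-1))) (Δf(x))²`. -/
theorem symmetric_group_CD (n : ℕ) (hn : 2 ≤ n)
    (f : Equiv.Perm (Fin n) → ℝ) (x : Equiv.Perm (Fin n)) :
    (1 / ((n : ℝ) * (n - 1))) * (lapT n f x) ^ 2 ≤ gamma2T n f x := by
  classical
  set T := transpositions n with hT
  -- Step 1: lower bound on the double sum of Qv
  have key : 4 * ∑ τ ∈ T, (Fv n f x τ)^2 ≤ ∑ τ ∈ T, ∑ σ ∈ T, Qv n f x (τ, σ) := by
    have hS : ∑ τ ∈ T, ∑ σ ∈ T, Qv n f x (τ, σ) = ∑ p ∈ T ×ˢ T, Qv n f x p :=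
      (Finset.sum_product _ _ _).symm
    have h1 : ∑ p ∈ T ×ˢ T, Qv n f x (rho p) = ∑ p ∈ T ×ˢ T, Qv n f x p :=
      sum_rho _
    have h2 : ∑ p ∈ T ×ˢ T, Qv n f x (rho (rho p)) = ∑ p ∈ T ×ˢ T, Qv n f x (rho p) :=
      sum_rho (fun p => Qv n f x (rho p))
    have h3 : ∑ p ∈ T ×ˢ T, Qv n f x (rho (rho (rho p)))
        = ∑ p ∈ T ×ˢ T, Qv n f x (rho (rho p)) := sum_rho (fun p => Qv n f x (rho (rho p)))
    have h4 : ∑ p ∈ T ×ˢ T, Qv n f x (rho (rho (rho (rho p))))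
        = ∑ p ∈ T ×ˢ T, Qv n f x (rho (rho (rho p))) := sum_rho (fun p => Qv n f x (rho (rho (rho p))))
    have h5 : ∑ p ∈ T ×ˢ T, Qv n f x (rho (rho (rho (rho (rho p)))))
        = ∑ p ∈ T ×ˢ T, Qv n f x (rho (rho (rho (rho p)))) := sum_rho (fun p => Qv n f x (rho (rho (rho (rho p)))))
    have hsix : ∑ p ∈ T ×ˢ T, (Qv n f x p + Qv n f x (rho p) + Qv n f x (rho (rho p))
        + Qv n f x (rho (rho (rho p))) + Qv n f x (rho (rho (rho (rho p))))
        + Qv n f x (rho (rho (rho (rho (rho p))))))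
        = 6 * ∑ p ∈ T ×ˢ T, Qv n f x p := by
      simp only [Finset.sum_add_distrib]
      rw [h1, h2, h1, h3, h2, h1, h4, h3, h2, h1, h5, h4, h3, h2, h1]
      ring
    have hlow : ∑ p ∈ T ×ˢ T, (if p.1 = p.2 then 24 * (Fv n f x p.1)^2 else 0)
        ≤ ∑ p ∈ T ×ˢ T, (Qv n f x p + Qv n f x (rho p) + Qv n f x (rho (rho p))
        + Qv n f x (rho (rho (rho p))) + Qv n f x (rho (rho (rho (rho p))))
        + Qv n f x (rho (rho (rho (rho (rho p)))))) := by
      refine Finset.sum_le_sum ?_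
      rintro ⟨τ, σ⟩ hp
      obtain ⟨hm1, hm2⟩ := Finset.mem_product.mp hp
      exact orbit_bound n f x τ σ (memT.mp hm1) (memT.mp hm2)
    have hdiag : ∑ p ∈ T ×ˢ T, (if p.1 = p.2 then 24 * (Fv n f x p.1)^2 else 0)
        = 24 * ∑ τ ∈ T, (Fv n f x τ)^2 := by
      rw [Finset.sum_product, Finset.mul_sum]
      refine Finset.sum_congr rfl fun τ hτ => ?_
      simp only []
      rw [Finset.sum_ite_eq T τ (fun _ => 24 * (Fv n f x τ)^2), if_pos hτ]
    rw [hS]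
    linarith [hdiag ▸ hsix ▸ hlow]
  -- Step 2: Cauchy-Schwarz
  have hlap : lapT n f x = ∑ τ ∈ T, Fv n f x τ := rfl
  have hCS : (lapT n f x)^2 ≤ (T.card : ℝ) * ∑ τ ∈ T, (Fv n f x τ)^2 := by
    rw [hlap]
    exact sq_sum_le_card_mul_sum_sq
  have hsum_nonneg : (0:ℝ) ≤ ∑ τ ∈ T, (Fv n f x τ)^2 :=
    Finset.sum_nonneg fun _ _ => sq_nonneg _
  have hcard : (T.card : ℝ) ≤ (n : ℝ) * ((n : ℝ) - 1) := by
    have h := card_T_le n (by omega)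
    have : ((n * (n - 1) : ℕ) : ℝ) = (n : ℝ) * ((n : ℝ) - 1) := by
      push_cast [Nat.cast_sub (by omega : 1 ≤ n)]
      ring
    calc (T.card : ℝ) ≤ ((n * (n - 1) : ℕ) : ℝ) := by exact_mod_cast h
      _ = (n : ℝ) * ((n : ℝ) - 1) := this
  have hpos : (0:ℝ) < (n : ℝ) * ((n : ℝ) - 1) := by
    have h2 : (2:ℝ) ≤ (n:ℝ) := by exact_mod_cast hn
    nlinarith
  rw [gamma2_eq, ← hT]
  have hfinal : (lapT n f x)^2 ≤ ((n : ℝ) * ((n : ℝ) - 1)) * ∑ τ ∈ T, (Fv n f x τ)^2 := by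
    calc (lapT n f x)^2 ≤ (T.card : ℝ) * ∑ τ ∈ T, (Fv n f x τ)^2 := hCS
      _ ≤ ((n : ℝ) * ((n : ℝ) - 1)) * ∑ τ ∈ T, (Fv n f x τ)^2 :=
        mul_le_mul_of_nonneg_right hcard hsum_nonneg
  rw [div_mul_eq_mul_div, one_mul, div_le_iff₀ hpos]
  calc (lapT n f x)^2 ≤ ((n : ℝ) * ((n : ℝ) - 1)) * ∑ τ ∈ T, (Fv n f x τ)^2 := hfinal
    _ ≤ ((1/4) * ∑ τ ∈ T, ∑ σ ∈ T, Qv n f x (τ, σ)) * ((n : ℝ) * ((n : ℝ) - 1)) := by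
        rw [mul_comm ((1/4) * _)]
        apply mul_le_mul_of_nonneg_left _ hpos.le
        linarith
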